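/- Let n ≥ 3 be an odd integer and let W_n be the wheel graph on n+1 vertices. Then for every set F of edges of W_n such that W_n − F has no isolated vertices, γ_t(W_n − F) ≤ γ_t(W_n) + (n−1) = n+1; moreover b_t^{n−1}(W_n) = 2n − (n+1)/2. -/

import Mathlib

open SimpleGraph

/-- A set `S` of vertices is a total dominating set of `G` if every vertex of `G`
is adjacent to at least one vertex of `S`. -/
def IsTotalDominatingSet {V : Type*} (G : SimpleGraph V) (S : Set V) : Prop :=
  ∀ v : V, ∃ u ∈ S, G.Adj v u

/-- The total domination number of `G`: the minimum cardinality of a total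
dominating set of `G`. -/
noncomputable def totalDominationNumber {V : Type*} (G : SimpleGraph V) : ℕ :=
  sInf {n : ℕ | ∃ S : Set V, S.ncard = n ∧ IsTotalDominatingSet G S}

/-- A graph has no isolated vertices if every vertex has a neighbor. -/
def NoIsolatedVerts {V : Type*} (G : SimpleGraph V) : Prop :=
  ∀ v : V, ∃ u : V, G.Adj v u

/-- The `k`-total bondage number of `G`: the minimum cardinality of a set `F` of
edges of `G` such that `G − F` has no isolated vertices and the total domination
number of `G − F` is at least `γ_t(G) + k`. -/
noncomputable def kTotalBondage {V : Type*} (G : SimpleGraph V) (k : ℕ) : ℕ :=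
  sInf {m : ℕ | ∃ F : Set (Sym2 V), F ⊆ G.edgeSet ∧ F.ncard = m ∧
    NoIsolatedVerts (G.deleteEdges F) ∧
    totalDominationNumber G + k ≤ totalDominationNumber (G.deleteEdges F)}

/-- The wheel graph `W_n` on `n + 1` vertices: a hub vertex (`none`) joined to
every vertex of a cycle `C_n` (the vertices `some i`). -/
def wheelGraph (n : ℕ) : SimpleGraph (Option (Fin n)) :=
  SimpleGraph.fromRel (fun v w =>
    v = none ∨ ∃ i j : Fin n, v = some i ∧ w = some j ∧ (cycleGraph n).Adj i j)

instance wheelDec (n : ℕ) : DecidableRel (wheelGraph n).Adj := fun v w =>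
  decidable_of_iff _ (SimpleGraph.fromRel_adj _ v w).symm

section General
variable {V : Type*} {G : SimpleGraph V}

lemma tds_nonempty_mem [Fintype V] (h : NoIsolatedVerts G) :
    Fintype.card V ∈ {n : ℕ | ∃ S : Set V, S.ncard = n ∧ IsTotalDominatingSet G S} := by
  refine ⟨Set.univ, by simp [Set.ncard_univ, Nat.card_eq_fintype_card], fun v => ?_⟩
  obtain ⟨u, hu⟩ := h v
  exact ⟨u, trivial, hu⟩

lemma tdn_le_card [Fintype V] (h : NoIsolatedVerts G) :
    totalDominationNumber G ≤ Fintype.card V :=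
  Nat.sInf_le (tds_nonempty_mem h)

lemma two_le_tds_card [Finite V] [Nonempty V] {m : ℕ}
    (hm : ∃ S : Set V, S.ncard = m ∧ IsTotalDominatingSet G S) : 2 ≤ m := by
  obtain ⟨S, rfl, hS⟩ := hm
  by_contra h
  push_neg at h
  interval_cases h' : S.ncard
  · rw [Set.ncard_eq_zero (Set.toFinite S)] at h'
    obtain ⟨u, hu, _⟩ := hS (Classical.arbitrary V)
    simp [h'] at hu
  · obtain ⟨a, rfl⟩ := Set.ncard_eq_one.mp h'
    obtain ⟨u, hu, hadj⟩ := hS a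
    rw [Set.mem_singleton_iff] at hu
    subst hu
    exact G.irrefl hadj

/-- If every vertex `v` has exactly one neighbor, namely `p v`, then the total
domination number is the number of vertices. -/
lemma tdn_matching [Fintype V] (p : V → V) (h : ∀ v u, G.Adj v u ↔ u = p v) :
    totalDominationNumber G = Fintype.card V := by
  have hadj : ∀ v, G.Adj v (p v) := fun v => (h v (p v)).mpr rfl
  have hinv : ∀ v, p (p v) = v := fun v => ((h (p v) v).mp (hadj v).symm).symm
  have hsurj : Function.Surjective p := fun v => ⟨p v, hinv v⟩
  have hmem := tds_nonempty_mem (G := G) (fun v => ⟨p v, hadj v⟩)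
  refine le_antisymm (Nat.sInf_le hmem) (le_csInf ⟨_, hmem⟩ ?_)
  rintro m ⟨S, rfl, hS⟩
  have : S = Set.univ := by
    apply Set.eq_univ_of_forall
    intro z
    obtain ⟨v, rfl⟩ := hsurj z
    obtain ⟨u, hu, hadj'⟩ := hS v
    rwa [(h v u).mp hadj'] at hu
  rw [this, Set.ncard_univ, Nat.card_eq_fintype_card]

end General

section Wheel
variable {n : ℕ}

lemma wheel_adj_none {w : Option (Fin n)} :
    (wheelGraph n).Adj none w ↔ w ≠ none := by
  rw [wheelGraph, SimpleGraph.fromRel_adj]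
  constructor
  · rintro ⟨h, -⟩
    exact fun e => h e.symm
  · intro h
    exact ⟨Ne.symm h, Or.inl (Or.inl rfl)⟩

lemma wheel_adj_some_none {i : Fin n} : (wheelGraph n).Adj (some i) none := by
  exact (wheel_adj_none.mpr (by simp)).symm

lemma wheel_adj_some {i j : Fin n} :
    (wheelGraph n).Adj (some i) (some j) ↔ (cycleGraph n).Adj i j := by
  rw [wheelGraph, SimpleGraph.fromRel_adj]
  constructor
  · rintro ⟨hne, (h | ⟨a, b, ha, hb, hab⟩) | (h | ⟨a, b, ha, hb, hab⟩)⟩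
    · simp at h
    · obtain rfl : a = i := (Option.some.inj ha).symm
      obtain rfl : b = j := (Option.some.inj hb).symm
      exact hab
    · simp at h
    · obtain rfl : a = j := (Option.some.inj ha).symm
      obtain rfl : b = i := (Option.some.inj hb).symm
      exact hab.symm
  · intro h
    exact ⟨by simpa using h.ne, Or.inl (Or.inr ⟨i, j, rfl, rfl, h⟩)⟩

lemma wheel_degree_none (hn : 3 ≤ n) : (wheelGraph n).degree none = n := by
  have h : (wheelGraph n).neighborFinset none = Finset.univ.erase none := by
    ext w
    simp [SimpleGraph.mem_neighborFinset, wheel_adj_none]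
  rw [SimpleGraph.degree, h, Finset.card_erase_of_mem (Finset.mem_univ _), Finset.card_univ]
  simp

lemma wheel_degree_some (hn : 3 ≤ n) (i : Fin n) : (wheelGraph n).degree (some i) = 3 := by
  obtain ⟨m, rfl⟩ : ∃ m, n = m + 3 := ⟨n - 3, by omega⟩
  have h : (wheelGraph (m + 3)).neighborFinset (some i) =
      insert none (((cycleGraph (m + 3)).neighborFinset i).image some) := by
    ext w
    cases w with
    | none => simp [SimpleGraph.mem_neighborFinset, wheel_adj_some_none]
    | some j => simp [SimpleGraph.mem_neighborFinset, wheel_adj_some]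
  rw [SimpleGraph.degree, h, Finset.card_insert_of_notMem (by simp),
    Finset.card_image_of_injective _ (Option.some_injective _)]
  have := SimpleGraph.cycleGraph_degree_three_le (n := m) (v := i)
  rw [SimpleGraph.degree] at this
  rw [this]

lemma wheel_edge_card (hn : 3 ≤ n) : (wheelGraph n).edgeFinset.card = 2 * n := by
  have h := SimpleGraph.sum_degrees_eq_twice_card_edges (wheelGraph n)
  rw [Fintype.sum_option, wheel_degree_none hn] at h
  have h2 : ∑ i : Fin n, (wheelGraph n).degree (some i) = 3 * n := by
    rw [Finset.sum_congr rfl fun i _ => wheel_degree_some hn i]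
    simp [mul_comm]
  omega

lemma wheel_edgeSet_ncard (hn : 3 ≤ n) : (wheelGraph n).edgeSet.ncard = 2 * n := by
  rw [← SimpleGraph.coe_edgeFinset, Set.ncard_coe_finset, wheel_edge_card hn]

lemma wheel_tdn (hn : 3 ≤ n) : totalDominationNumber (wheelGraph n) = 2 := by
  obtain ⟨m, rfl⟩ : ∃ m, n = m + 3 := ⟨n - 3, by omega⟩
  have hmem : 2 ∈ {k : ℕ | ∃ S : Set (Option (Fin (m + 3))),
      S.ncard = k ∧ IsTotalDominatingSet (wheelGraph (m + 3)) S} := by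
    refine ⟨{none, some 0}, ?_, ?_⟩
    · rw [Set.ncard_pair (by simp)]
    · intro v
      cases v with
      | none => exact ⟨some 0, by simp, wheel_adj_none.mpr (by simp)⟩
      | some i => exact ⟨none, by simp, wheel_adj_some_none⟩
  exact le_antisymm (Nat.sInf_le hmem) (le_csInf ⟨_, hmem⟩ fun m hm => two_le_tds_card hm)

end Wheel

section Matching
variable {m : ℕ}

/-- The perfect-matching partner function on the wheel `W_{m+3}`. -/
def wpartner (m : ℕ) : Option (Fin (m + 3)) → Option (Fin (m + 3))
  | none => some 0
  | some i => if i.val = 0 then none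
      else if i.val % 2 = 1 then some (i + 1) else some (i - 1)

lemma wp_none : wpartner m none = some 0 := rfl

lemma wp_some (i : Fin (m + 3)) : wpartner m (some i) =
    if i.val = 0 then none else if i.val % 2 = 1 then some (i + 1) else some (i - 1) := rfl

lemma val_succ (hodd : Odd (m + 3)) {i : Fin (m + 3)} (h : i.val % 2 = 1) :
    (i + 1).val = i.val + 1 := by
  obtain ⟨t, ht⟩ := hodd
  rw [Fin.val_add_one]
  have : i ≠ Fin.last (m + 2) := by
    intro e
    rw [e] at h
    simp only [Fin.val_last] at h
    omega
  rw [if_neg this]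

lemma val_pred {i : Fin (m + 3)} (h : 1 ≤ i.val) : (i - 1).val = i.val - 1 := by
  rw [Fin.coe_sub_one]
  have : i ≠ 0 := by
    intro e; rw [e] at h; simp at h
  rw [if_neg this]

lemma cyc_adj_succ (i : Fin (m + 3)) : (cycleGraph (m + 3)).Adj i (i + 1) :=
  cycleGraph_adj'.mpr (Or.inr (by rw [add_sub_cancel_left]; exact Fin.val_one (m + 1)))

lemma cyc_adj_pred (i : Fin (m + 3)) : (cycleGraph (m + 3)).Adj i (i - 1) :=
  cycleGraph_adj'.mpr (Or.inl (by rw [sub_sub_cancel]; exact Fin.val_one (m + 1)))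

lemma wheel_adj_partner (v : Option (Fin (m + 3))) :
    (wheelGraph (m + 3)).Adj v (wpartner m v) := by
  cases v with
  | none => exact wheel_adj_none.mpr (by simp [wp_none])
  | some i =>
    rw [wp_some]
    split_ifs with h1 h2
    · exact wheel_adj_some_none
    · exact wheel_adj_some.mpr (cyc_adj_succ i)
    · exact wheel_adj_some.mpr (cyc_adj_pred i)

lemma wpartner_invol (hodd : Odd (m + 3)) (v : Option (Fin (m + 3))) :
    wpartner m (wpartner m v) = v := by
  obtain ⟨t, ht⟩ := hodd
  cases v with
  | none => simp [wp_none, wp_some]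
  | some i =>
    rw [wp_some]
    split_ifs with h1 h2
    · rw [wp_none]
      congr 1
      exact (Fin.ext h1).symm
    · have hv : (i + 1).val = i.val + 1 := val_succ ⟨t, ht⟩ h2
      rw [wp_some, if_neg (by omega), if_neg (by omega), add_sub_cancel_right]
    · have h3 : 1 ≤ i.val := by omega
      have hv : (i - 1).val = i.val - 1 := val_pred h3
      rw [wp_some, if_neg (by omega), if_pos (by omega), sub_add_cancel]

/-- Representatives: one endpoint from each matching edge. -/
def wreps (m : ℕ) : Finset (Option (Fin (m + 3))) :=
  insert none ((Finset.univ.filter (fun i : Fin (m + 3) => i.val % 2 = 1)).image some)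

lemma mem_wreps {v : Option (Fin (m + 3))} :
    v ∈ wreps m ↔ v = none ∨ ∃ i : Fin (m + 3), v = some i ∧ i.val % 2 = 1 := by
  simp only [wreps, Finset.mem_insert, Finset.mem_image, Finset.mem_filter, Finset.mem_univ,
    true_and]
  constructor
  · rintro (rfl | ⟨i, hi, rfl⟩)
    · exact Or.inl rfl
    · exact Or.inr ⟨i, rfl, hi⟩
  · rintro (rfl | ⟨i, rfl, hi⟩)
    · exact Or.inl rfl
    · exact Or.inr ⟨i, hi, rfl⟩

lemma partner_not_rep (hodd : Odd (m + 3)) {v : Option (Fin (m + 3))} (hv : v ∈ wreps m) :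
    wpartner m v ∉ wreps m := by
  rw [mem_wreps] at hv
  rcases hv with rfl | ⟨i, rfl, hi⟩
  · rw [wp_none, mem_wreps]
    rintro (h | ⟨j, hj, hj2⟩)
    · cases h
    · obtain rfl : (0 : Fin (m + 3)) = j := Option.some.inj hj
      simp at hj2
  · rw [wp_some, if_neg (by omega), if_pos hi, mem_wreps]
    rintro (h | ⟨j, hj, hj2⟩)
    · cases h
    · obtain rfl : i + 1 = j := Option.some.inj hj
      rw [val_succ hodd hi] at hj2
      omega

lemma rep_or_partner (hodd : Odd (m + 3)) (v : Option (Fin (m + 3))) :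
    v ∈ wreps m ∨ wpartner m v ∈ wreps m := by
  cases v with
  | none => exact Or.inl (mem_wreps.mpr (Or.inl rfl))
  | some i =>
    by_cases h1 : i.val = 0
    · right
      rw [wp_some, if_pos h1]
      exact mem_wreps.mpr (Or.inl rfl)
    · by_cases h2 : i.val % 2 = 1
      · exact Or.inl (mem_wreps.mpr (Or.inr ⟨i, rfl, h2⟩))
      · right
        rw [wp_some, if_neg h1, if_neg h2]
        refine mem_wreps.mpr (Or.inr ⟨i - 1, rfl, ?_⟩)
        rw [val_pred (by omega)]
        omega

/-- The matching edges. -/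
def wmatch (m : ℕ) : Finset (Sym2 (Option (Fin (m + 3)))) :=
  (wreps m).image (fun v => s(v, wpartner m v))

lemma mem_wmatch (hodd : Odd (m + 3)) {v w : Option (Fin (m + 3))} :
    s(v, w) ∈ wmatch m ↔ w = wpartner m v := by
  constructor
  · intro h
    rw [wmatch, Finset.mem_image] at h
    obtain ⟨r, _, hr⟩ := h
    rw [Sym2.eq_iff] at hr
    rcases hr with ⟨rfl, rfl⟩ | ⟨h1, rfl⟩
    · rfl
    · rw [h1, wpartner_invol hodd]
  · rintro rfl
    rcases rep_or_partner hodd v with h | h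
    · exact Finset.mem_image.mpr ⟨v, h, rfl⟩
    · refine Finset.mem_image.mpr ⟨wpartner m v, h, ?_⟩
      rw [wpartner_invol hodd, Sym2.eq_swap]

lemma card_odd_range (k : ℕ) : ((Finset.range k).filter (fun x => x % 2 = 1)).card = k / 2 := by
  induction k with
  | zero => rfl
  | succ j ih =>
    rw [Finset.range_add_one, Finset.filter_insert]
    by_cases h : j % 2 = 1
    · rw [if_pos h, Finset.card_insert_of_notMem (by simp)]
      omega
    · rw [if_neg h]
      omega

lemma card_filter_odd :
    (Finset.univ.filter (fun i : Fin (m + 3) => i.val % 2 = 1)).card = (m + 3) / 2 := by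
  rw [Finset.card_filter, Fin.sum_univ_eq_sum_range (fun k => if k % 2 = 1 then 1 else 0),
    ← Finset.card_filter, card_odd_range]

lemma card_wreps : (wreps m).card = (m + 3) / 2 + 1 := by
  rw [wreps, Finset.card_insert_of_notMem (by simp),
    Finset.card_image_of_injective _ (Option.some_injective _), card_filter_odd]

lemma card_wmatch (hodd : Odd (m + 3)) : (wmatch m).card = (m + 4) / 2 := by
  rw [wmatch, Finset.card_image_of_injOn, card_wreps]
  · obtain ⟨t, ht⟩ := hodd
    omega
  · intro r₁ h₁ r₂ h₂ he
    rw [Finset.mem_coe] at h₁ h₂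
    rw [Sym2.eq_iff] at he
    rcases he with ⟨h, -⟩ | ⟨h, -⟩
    · exact h
    · exact absurd (h ▸ h₁) (partner_not_rep hodd h₂)

lemma wmatch_subset : (↑(wmatch m) : Set (Sym2 (Option (Fin (m + 3))))) ⊆
    (wheelGraph (m + 3)).edgeSet := by
  intro e he
  rw [Finset.mem_coe, wmatch, Finset.mem_image] at he
  obtain ⟨r, -, rfl⟩ := he
  exact (wheelGraph (m + 3)).mem_edgeSet.mpr (wheel_adj_partner r)

end Matching

section Main
variable {m : ℕ}

lemma card_V : Fintype.card (Option (Fin (m + 3))) = m + 4 := by simp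

/-- Deleting all non-matching edges yields the required edge set `F`. -/
lemma exists_good_F (hodd : Odd (m + 3)) :
    ∃ F : Set (Sym2 (Option (Fin (m + 3)))), F ⊆ (wheelGraph (m + 3)).edgeSet ∧
      F.ncard = 2 * (m + 3) - (m + 4) / 2 ∧
      NoIsolatedVerts ((wheelGraph (m + 3)).deleteEdges F) ∧
      totalDominationNumber ((wheelGraph (m + 3)).deleteEdges F) = m + 4 := by
  set F : Set (Sym2 (Option (Fin (m + 3)))) :=
    (wheelGraph (m + 3)).edgeSet \ ↑(wmatch m) with hFdef
  have hAdj : ∀ v w, ((wheelGraph (m + 3)).deleteEdges F).Adj v w ↔ w = wpartner m v := by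
    intro v w
    rw [SimpleGraph.deleteEdges_adj, hFdef]
    constructor
    · rintro ⟨hadj, hne⟩
      rw [Set.mem_diff, not_and, not_not] at hne
      have := hne ((wheelGraph (m + 3)).mem_edgeSet.mpr hadj)
      exact (mem_wmatch hodd).mp (Finset.mem_coe.mp this)
    · rintro rfl
      refine ⟨wheel_adj_partner v, ?_⟩
      rw [Set.mem_diff, not_and, not_not]
      intro _
      exact Finset.mem_coe.mpr ((mem_wmatch hodd).mpr rfl)
  refine ⟨F, Set.diff_subset, ?_, fun v => ⟨wpartner m v, (hAdj v _).mpr rfl⟩, ?_⟩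
  · rw [hFdef, Set.ncard_diff wmatch_subset,
      wheel_edgeSet_ncard (by omega), Set.ncard_coe_finset, card_wmatch hodd]
  · rw [tdn_matching (wpartner m) hAdj, card_V]

/-- Any admissible `F` for the `(n-1)`-total bondage problem has exactly
`2n - (n+1)/2` edges: the remaining graph must be a perfect matching. -/
lemma good_F_ncard (hodd : Odd (m + 3)) (F : Set (Sym2 (Option (Fin (m + 3)))))
    (hF : F ⊆ (wheelGraph (m + 3)).edgeSet)
    (hiso : NoIsolatedVerts ((wheelGraph (m + 3)).deleteEdges F))
    (hge : m + 4 ≤ totalDominationNumber ((wheelGraph (m + 3)).deleteEdges F)) :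
    F.ncard = 2 * (m + 3) - (m + 4) / 2 := by
  obtain ⟨t, ht⟩ := hodd
  set H := (wheelGraph (m + 3)).deleteEdges F with hHdef
  -- every vertex has a private pendant neighbor
  have key : ∀ v : Option (Fin (m + 3)), ∃ w, ∀ u, H.Adj w u ↔ u = v := by
    intro v
    have hnot : ¬ IsTotalDominatingSet H (Set.univ \ {v}) := by
      intro hTDS
      have hcard : (Set.univ \ {v} : Set (Option (Fin (m + 3)))).ncard = m + 3 := by
        rw [Set.ncard_diff (Set.subset_univ _), Set.ncard_univ, Set.ncard_singleton,
          Nat.card_eq_fintype_card, card_V]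
        omega
      have hle : totalDominationNumber H ≤ m + 3 :=
        Nat.sInf_le (show m + 3 ∈ {k : ℕ | ∃ S : Set (Option (Fin (m + 3))),
          S.ncard = k ∧ IsTotalDominatingSet H S} from ⟨_, hcard, hTDS⟩)
      omega
    unfold IsTotalDominatingSet at hnot
    push_neg at hnot
    obtain ⟨w, hw⟩ := hnot
    have hw' : ∀ u, u ≠ v → ¬ H.Adj w u := by
      intro u hu
      exact hw u (by simp [hu])
    refine ⟨w, fun u => ⟨fun h => ?_, fun h => ?_⟩⟩
    · by_contra hne
      exact hw' u hne h
    · subst h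
      obtain ⟨u₀, hu₀⟩ := hiso w
      have : u₀ = u := by
        by_contra hne
        exact hw' u₀ hne hu₀
      rwa [this] at hu₀
  choose w hw using key
  have hinj : Function.Injective w := by
    intro v₁ v₂ he
    have h1 : H.Adj (w v₁) v₁ := (hw v₁ v₁).mpr rfl
    rw [he] at h1
    exact ((hw v₂ v₁).mp h1)
  have hsurj : Function.Surjective w := Finite.injective_iff_surjective.mp hinj
  have hp' : ∀ z, ∃ x, ∀ u, H.Adj z u ↔ u = x := by
    intro z
    obtain ⟨v, rfl⟩ := hsurj z
    exact ⟨v, hw v⟩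
  choose p hp using hp'
  letI : DecidableRel H.Adj := Classical.decRel _
  have hdeg : ∀ z, H.degree z = 1 := by
    intro z
    have : H.neighborFinset z = {p z} := by
      ext u
      rw [SimpleGraph.mem_neighborFinset, hp z u, Finset.mem_singleton]
    rw [SimpleGraph.degree, this, Finset.card_singleton]
  have hsum := SimpleGraph.sum_degrees_eq_twice_card_edges H
  rw [Finset.sum_congr rfl fun z _ => hdeg z, Finset.sum_const, Finset.card_univ, card_V,
    smul_eq_mul, mul_one] at hsum
  have hEH : H.edgeSet.ncard = (m + 4) / 2 := by
    rw [← SimpleGraph.coe_edgeFinset, Set.ncard_coe_finset]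
    omega
  have hFeq : F = (wheelGraph (m + 3)).edgeSet \ H.edgeSet := by
    rw [hHdef, SimpleGraph.edgeSet_deleteEdges, Set.diff_diff_cancel_left hF]
  rw [hFeq, Set.ncard_diff (SimpleGraph.edgeSet_mono (SimpleGraph.deleteEdges_le F)),
    wheel_edgeSet_ncard (by omega), hEH]

end Main


/-- For odd `n ≥ 3`, removing edges from the wheel `W_n` can increase the total
domination number by at most `n − 1` (i.e. up to `n + 1`), and
`b_t^{n−1}(W_n) = 2n − (n+1)/2`. -/
theorem kTotalBondage_wheelGraph_odd (n : ℕ) (hn : 3 ≤ n) (hpar : Odd n) :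
    (∀ F : Set (Sym2 (Option (Fin n))), F ⊆ (wheelGraph n).edgeSet →
      NoIsolatedVerts ((wheelGraph n).deleteEdges F) →
      totalDominationNumber ((wheelGraph n).deleteEdges F) ≤
        totalDominationNumber (wheelGraph n) + (n - 1)) ∧
    totalDominationNumber (wheelGraph n) + (n - 1) = n + 1 ∧
    kTotalBondage (wheelGraph n) (n - 1) = 2 * n - (n + 1) / 2 := by
  obtain ⟨m, rfl⟩ : ∃ m, n = m + 3 := ⟨n - 3, by omega⟩
  have htdn : totalDominationNumber (wheelGraph (m + 3)) = 2 := wheel_tdn (by omega)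
  have hsum : totalDominationNumber (wheelGraph (m + 3)) + (m + 3 - 1) = m + 4 := by
    rw [htdn]
    omega
  refine ⟨?_, by rw [hsum], ?_⟩
  · intro F hF hiso
    have := tdn_le_card hiso
    rw [card_V] at this
    omega
  · obtain ⟨F₀, h1, h2, h3, h4⟩ := exists_good_F (m := m) hpar
    have hmem : 2 * (m + 3) - (m + 4) / 2 ∈
        {k : ℕ | ∃ F : Set (Sym2 (Option (Fin (m + 3)))), F ⊆ (wheelGraph (m + 3)).edgeSet ∧
          F.ncard = k ∧ NoIsolatedVerts ((wheelGraph (m + 3)).deleteEdges F) ∧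
          totalDominationNumber (wheelGraph (m + 3)) + (m + 3 - 1) ≤
            totalDominationNumber ((wheelGraph (m + 3)).deleteEdges F)} :=
      ⟨F₀, h1, h2, h3, by rw [hsum, h4]⟩
    have : kTotalBondage (wheelGraph (m + 3)) (m + 3 - 1) = 2 * (m + 3) - (m + 4) / 2 := by
      refine le_antisymm (Nat.sInf_le hmem) (le_csInf ⟨_, hmem⟩ ?_)
      rintro b ⟨F, hF, rfl, hiso, hge⟩
      rw [hsum] at hge
      rw [good_F_ncard hpar F hF hiso hge]
    rw [this]
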